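/- arXiv:0911.1846 — 2 statements merged into one kernel-verified Lean document; each statement's English description precedes it below -/
import Mathlib

section
/- Let α > 0 and let Ψ^α(r) = (1/2π)[K_0(r/α) + log r] for r > 0, where K_0 is the modified Bessel function of the second kind of order zero. Then its derivative DΨ^α(r) = (1/2π)[−(1/α)K_1(r/α) + 1/r] is bounded on (0,∞), with sup_{r>0} |DΨ^α(r)| ≤ C/α for an absolute constant C independent of α. -/
open MeasureTheory Real Set Filter Topology

/-- The modified Bessel function of the second kind of order one,
`K₁(r) = ∫_0^∞ exp(−r cosh t) cosh t dt`. -/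
noncomputable def besselK1 (r : ℝ) : ℝ :=
  ∫ t in Set.Ioi (0 : ℝ), Real.exp (-r * Real.cosh t) * Real.cosh t

section aux

variable {s : ℝ}

lemma aux_deriv_sinh (hs : 0 < s) (t : ℝ) :
    HasDerivAt (fun t => -(1/s) * Real.exp (-s * Real.sinh t))
      (Real.exp (-s * Real.sinh t) * Real.cosh t) t := by
  have h : HasDerivAt (fun t : ℝ => -s * Real.sinh t) (-s * Real.cosh t) t :=
    (Real.hasDerivAt_sinh t).const_mul (-s)
  have h2 := (h.exp).const_mul (-(1/s))
  refine h2.congr_deriv ?_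
  field_simp

lemma aux_tendsto_sinh (hs : 0 < s) :
    Tendsto (fun t => -(1/s) * Real.exp (-s * Real.sinh t)) atTop (𝓝 0) := by
  have hsinh : Tendsto Real.sinh atTop atTop := by
    apply tendsto_atTop_mono' _ _ tendsto_id
    filter_upwards [eventually_ge_atTop (0:ℝ)] with t ht
    rcases ht.eq_or_lt with h | h
    · simp [← h]
    · exact (Real.self_lt_sinh_iff.2 h).le
  have h1 : Tendsto (fun t => -s * Real.sinh t) atTop atBot :=
    hsinh.const_mul_atTop_of_neg (by linarith)
  have h2 : Tendsto (fun t => Real.exp (-s * Real.sinh t)) atTop (𝓝 0) :=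
    Real.tendsto_exp_atBot.comp h1
  have := h2.const_mul (-(1/s))
  simpa using this

lemma aux_int_sinh (hs : 0 < s) :
    IntegrableOn (fun t => Real.exp (-s * Real.sinh t) * Real.cosh t) (Ioi 0) ∧
    ∫ t in Ioi (0:ℝ), Real.exp (-s * Real.sinh t) * Real.cosh t = 1 / s := by
  have hderiv : ∀ x ∈ Ici (0:ℝ), HasDerivAt (fun t => -(1/s) * Real.exp (-s * Real.sinh t))
      (Real.exp (-s * Real.sinh x) * Real.cosh x) x := fun x _ => aux_deriv_sinh hs x
  have hpos : ∀ x ∈ Ioi (0:ℝ), 0 ≤ Real.exp (-s * Real.sinh x) * Real.cosh x := fun x _ =>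
    mul_nonneg (Real.exp_pos _).le (Real.cosh_pos x).le
  constructor
  · exact integrableOn_Ioi_deriv_of_nonneg' hderiv hpos (aux_tendsto_sinh hs)
  · have := integral_Ioi_of_hasDerivAt_of_nonneg' hderiv hpos (aux_tendsto_sinh hs)
    simpa [Real.sinh_zero] using this

lemma aux_int_id (hs : 0 < s) :
    ∫ t in Ioi (0:ℝ), s * Real.exp (-s * t) = 1 := by
  have hderiv : ∀ x ∈ Ici (0:ℝ), HasDerivAt (fun t => -Real.exp (-s * t))
      (s * Real.exp (-s * x)) x := by
    intro x _
    have h : HasDerivAt (fun t : ℝ => -s * t) (-s) x := by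
      simpa using (hasDerivAt_id x).const_mul (-s)
    have := (h.exp).neg
    refine this.congr_deriv ?_
    ring
  have hpos : ∀ x ∈ Ioi (0:ℝ), 0 ≤ s * Real.exp (-s * x) := fun x _ =>
    mul_nonneg hs.le (Real.exp_pos _).le
  have htend : Tendsto (fun t => -Real.exp (-s * t)) atTop (𝓝 0) := by
    have h1 : Tendsto (fun t : ℝ => -s * t) atTop atBot :=
      tendsto_id.const_mul_atTop_of_neg (by linarith)
    have h2 := Real.tendsto_exp_atBot.comp h1
    simpa using h2.neg
  have := integral_Ioi_of_hasDerivAt_of_nonneg' hderiv hpos htend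
  simpa using this

/-- Key bound: `0 ≤ 1/s − K₁(s) ≤ 1` for `s > 0`. -/
lemma key_bound (hs : 0 < s) : |1 / s - besselK1 s| ≤ 1 := by
  obtain ⟨hI1, hV1⟩ := aux_int_sinh hs
  have hle : ∀ t ∈ Ioi (0:ℝ), Real.exp (-s * Real.cosh t) * Real.cosh t ≤
      Real.exp (-s * Real.sinh t) * Real.cosh t := by
    intro t ht
    apply mul_le_mul_of_nonneg_right _ (Real.cosh_pos t).le
    apply Real.exp_le_exp.2
    nlinarith [Real.cosh_sub_sinh t, Real.exp_pos (-t), hs]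
  have hI2 : IntegrableOn (fun t => Real.exp (-s * Real.cosh t) * Real.cosh t) (Ioi 0) := by
    apply Integrable.mono hI1
    · exact ((Real.continuous_exp.comp ((continuous_const.mul Real.continuous_cosh))).mul
        Real.continuous_cosh).aestronglyMeasurable
    · filter_upwards [ae_restrict_mem measurableSet_Ioi] with t ht
      have h2 : 0 ≤ Real.exp (-s * Real.cosh t) * Real.cosh t :=
        mul_nonneg (Real.exp_pos _).le (Real.cosh_pos t).le
      have h1 : 0 ≤ Real.exp (-s * Real.sinh t) * Real.cosh t :=
        mul_nonneg (Real.exp_pos _).le (Real.cosh_pos t).le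
      rw [Real.norm_eq_abs, Real.norm_eq_abs, abs_of_nonneg h2, abs_of_nonneg h1]
      exact hle t ht
  have hK : besselK1 s = ∫ t in Ioi (0:ℝ), Real.exp (-s * Real.cosh t) * Real.cosh t := rfl
  have hsub : ∫ t in Ioi (0:ℝ),
      (Real.exp (-s * Real.sinh t) * Real.cosh t - Real.exp (-s * Real.cosh t) * Real.cosh t)
      = 1 / s - besselK1 s := by
    rw [integral_sub hI1 hI2, hV1, hK]
  have hnn : 0 ≤ ∫ t in Ioi (0:ℝ),
      (Real.exp (-s * Real.sinh t) * Real.cosh t - Real.exp (-s * Real.cosh t) * Real.cosh t) :=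
    setIntegral_nonneg measurableSet_Ioi fun t ht => sub_nonneg.2 (hle t ht)
  have hub : (∫ t in Ioi (0:ℝ),
      (Real.exp (-s * Real.sinh t) * Real.cosh t - Real.exp (-s * Real.cosh t) * Real.cosh t))
      ≤ 1 := by
    rw [← aux_int_id hs]
    apply integral_mono_of_nonneg
    · filter_upwards [ae_restrict_mem measurableSet_Ioi] with t ht
      exact sub_nonneg.2 (hle t ht)
    · exact (exp_neg_integrableOn_Ioi 0 hs).const_mul s
    · filter_upwards [ae_restrict_mem measurableSet_Ioi] with t ht
      have ht0 : (0:ℝ) < t := ht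
      have hcs : Real.cosh t - Real.sinh t = Real.exp (-t) := Real.cosh_sub_sinh t
      have hfe : Real.exp (-s * Real.cosh t)
          = Real.exp (-s * Real.sinh t) * Real.exp (-(s * Real.exp (-t))) := by
        rw [← Real.exp_add]
        congr 1
        have h : Real.cosh t = Real.sinh t + Real.exp (-t) := by linarith
        rw [h]; ring
      have h1e : 1 - Real.exp (-(s * Real.exp (-t))) ≤ s * Real.exp (-t) := by
        linarith [Real.add_one_le_exp (-(s * Real.exp (-t)))]
      have step1 : Real.exp (-s * Real.sinh t) * Real.cosh t
            - Real.exp (-s * Real.cosh t) * Real.cosh t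
          ≤ Real.exp (-s * Real.sinh t) * (s * Real.exp (-t)) * Real.cosh t := by
        rw [hfe]
        calc Real.exp (-s * Real.sinh t) * Real.cosh t -
              Real.exp (-s * Real.sinh t) * Real.exp (-(s * Real.exp (-t))) * Real.cosh t
            = Real.exp (-s * Real.sinh t) * (1 - Real.exp (-(s * Real.exp (-t))))
              * Real.cosh t := by ring
          _ ≤ Real.exp (-s * Real.sinh t) * (s * Real.exp (-t)) * Real.cosh t := by
              apply mul_le_mul_of_nonneg_right _ (Real.cosh_pos t).le
              exact mul_le_mul_of_nonneg_left h1e (Real.exp_pos _).le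
      have hec : Real.exp (-t) * Real.cosh t ≤ 1 := by
        rw [Real.cosh_eq]
        have e1 : Real.exp (-t) * Real.exp t = 1 := by
          rw [← Real.exp_add]; simp
        have e2 : Real.exp (-t) ≤ 1 := Real.exp_le_one_iff.2 (by linarith)
        nlinarith [Real.exp_pos (-t)]
      have hst : Real.exp (-s * Real.sinh t) ≤ Real.exp (-s * t) := by
        apply Real.exp_le_exp.2
        have h : t ≤ Real.sinh t := (Real.self_lt_sinh_iff.2 ht0).le
        nlinarith
      calc Real.exp (-s * Real.sinh t) * Real.cosh t
            - Real.exp (-s * Real.cosh t) * Real.cosh t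
          ≤ Real.exp (-s * Real.sinh t) * (s * Real.exp (-t)) * Real.cosh t := step1
        _ = s * (Real.exp (-s * Real.sinh t) * (Real.exp (-t) * Real.cosh t)) := by ring
        _ ≤ s * (Real.exp (-s * t) * 1) := by
            apply mul_le_mul_of_nonneg_left _ hs.le
            exact mul_le_mul hst hec (by positivity) (Real.exp_pos _).le
        _ = s * Real.exp (-s * t) := by ring
  rw [← hsub, abs_of_nonneg hnn]
  exact hub

end aux

/-- the derivative `DΨ^α(r) = (1/2π)[−(1/α)K₁(r/α) + 1/r]` of the kernel
`Ψ^α` is bounded on `(0,∞)` by `C/α`, with `C` an absolute constant independent of `α`. -/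
theorem DPsi_alpha_bound :
    ∃ C > 0, ∀ α : ℝ, 0 < α → ∀ r : ℝ, 0 < r →
      |(1 / (2 * Real.pi)) * (-(1 / α) * besselK1 (r / α) + 1 / r)| ≤ C / α := by
  refine ⟨1, one_pos, fun α hα r hr => ?_⟩
  set s := r / α with hs_def
  have hs : 0 < s := div_pos hr hα
  have hkey := key_bound hs
  have hrw : -(1 / α) * besselK1 s + 1 / r = (1 / α) * (1 / s - besselK1 s) := by
    rw [hs_def]
    field_simp
    ring
  rw [hrw, abs_mul, abs_mul]
  have hπ : (0:ℝ) < 2 * Real.pi := by positivity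
  have h1 : |1 / (2 * Real.pi)| = 1 / (2 * Real.pi) := abs_of_pos (by positivity)
  have h2 : |1 / α| = 1 / α := abs_of_pos (by positivity)
  rw [h1, h2]
  have hπ1 : 1 / (2 * Real.pi) ≤ 1 := by
    rw [div_le_one hπ]
    nlinarith [Real.pi_gt_three]
  calc 1 / (2 * Real.pi) * (1 / α * |1 / s - besselK1 s|)
      ≤ 1 * (1 / α * 1) := by
        apply mul_le_mul hπ1 _ (by positivity) one_pos.le
        exact mul_le_mul_of_nonneg_left hkey (by positivity)
    _ = 1 / α := by ring
end

section
/- Let α > 0 and K^α(x) = (x^⊥/|x|) DΨ^α(|x|) be the smoothed Biot–Savart kernel on ℝ², with DΨ^α(r) = (1/2π)[−(1/α)K_1(r/α) + 1/r]. Then there exists an absolute constant C, independent of α, such that |∇K^α(x)| ≤ C/|x|² for all x ≠ 0. -/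
open MeasureTheory

/-- `DΨ^α(r) = (1/2π)[−(1/α)K₁(r/α) + 1/r]`. -/
noncomputable def DPsi (α r : ℝ) : ℝ :=
  (1 / (2 * Real.pi)) * (-(1 / α) * besselK1 (r / α) + 1 / r)

/-- Rotation by `π/2`: `x^⊥ = (−x₂, x₁)` in `ℝ²`. -/
noncomputable def perp (z : EuclideanSpace ℝ (Fin 2)) : EuclideanSpace ℝ (Fin 2) :=
  EuclideanSpace.single 0 (-(z 1)) + EuclideanSpace.single 1 (z 0)

/-- The smoothed Biot–Savart kernel `K^α(x) = (x^⊥/|x|) DΨ^α(|x|)`. -/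
noncomputable def smoothedKernel (α : ℝ) (x : EuclideanSpace ℝ (Fin 2)) :
    EuclideanSpace ℝ (Fin 2) :=
  (DPsi α ‖x‖ / ‖x‖) • perp x


section aux

open Set Filter Real


lemma tendsto_aux (b c : ℝ) (hb : 0 < b) :
    Tendsto (fun u : ℝ => (u + c) * Real.exp (-b * u)) atTop (nhds 0) := by
  have h1 := tendsto_rpow_mul_exp_neg_mul_atTop_nhds_zero 1 b hb
  have h0 := tendsto_rpow_mul_exp_neg_mul_atTop_nhds_zero 0 b hb
  have h := h1.add (h0.const_mul c)
  norm_num at h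
  apply h.congr'
  filter_upwards [eventually_gt_atTop (0:ℝ)] with u hu
  ring

lemma tendsto_inner_atBot (a : ℝ) (ha : 0 < a) :
    Tendsto (fun t : ℝ => -a * ((Real.exp t - 1) / 2)) atTop atBot := by
  apply Tendsto.const_mul_atTop_of_neg (by linarith : -a < 0)
  apply Tendsto.atTop_div_const (by norm_num : (0:ℝ) < 2)
  exact tendsto_atTop_add_const_right _ _ Real.tendsto_exp_atTop

lemma intA (a : ℝ) (ha : 0 < a) :
    IntegrableOn (fun t => Real.exp (-a * ((Real.exp t - 1) / 2)) * Real.exp t) (Set.Ioi 0) ∧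
    ∫ t in Set.Ioi (0:ℝ), Real.exp (-a * ((Real.exp t - 1) / 2)) * Real.exp t = 2 / a := by
  set g : ℝ → ℝ := fun t => -(2/a) * Real.exp (-a * ((Real.exp t - 1) / 2)) with hg
  have hderiv : ∀ t ∈ Set.Ici (0:ℝ), HasDerivAt g
      (Real.exp (-a * ((Real.exp t - 1) / 2)) * Real.exp t) t := by
    intro t _
    have hi : HasDerivAt (fun t : ℝ => -a * ((Real.exp t - 1) / 2))
        (-a * (Real.exp t / 2)) t :=
      (((Real.hasDerivAt_exp t).sub_const 1).div_const 2).const_mul (-a)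
    have := (hi.exp).const_mul (-(2/a))
    refine this.congr_deriv ?_
    field_simp
  have hpos : ∀ t ∈ Set.Ioi (0:ℝ),
      0 ≤ Real.exp (-a * ((Real.exp t - 1) / 2)) * Real.exp t := by
    intro t _; positivity
  have htend : Tendsto g atTop (nhds 0) := by
    have h2 : Tendsto (fun t : ℝ => Real.exp (-a * ((Real.exp t - 1) / 2))) atTop (nhds 0) :=
      Real.tendsto_exp_atBot.comp (tendsto_inner_atBot a ha)
    have h := h2.const_mul (-(2/a))
    rw [mul_zero] at h
    exact h.congr (fun t => by simp only [hg])
  have hint := integrableOn_Ioi_deriv_of_nonneg' hderiv hpos htend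
  refine ⟨hint, ?_⟩
  rw [integral_Ioi_of_hasDerivAt_of_nonneg' hderiv hpos htend]
  simp only [hg]
  norm_num


lemma intB (a : ℝ) (ha : 0 < a) :
    IntegrableOn (fun t => Real.exp (-a * ((Real.exp t - 1) / 2)) * Real.exp t ^ 2) (Set.Ioi 0) ∧
    ∫ t in Set.Ioi (0:ℝ), Real.exp (-a * ((Real.exp t - 1) / 2)) * Real.exp t ^ 2
      = 2 / a + 4 / a ^ 2 := by
  set g : ℝ → ℝ :=
    fun t => -(2/a) * (Real.exp (-a * ((Real.exp t - 1) / 2)) * (Real.exp t + 2/a)) with hg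
  have hderiv : ∀ t ∈ Set.Ici (0:ℝ), HasDerivAt g
      (Real.exp (-a * ((Real.exp t - 1) / 2)) * Real.exp t ^ 2) t := by
    intro t _
    have hi : HasDerivAt (fun t : ℝ => -a * ((Real.exp t - 1) / 2))
        (-a * (Real.exp t / 2)) t :=
      (((Real.hasDerivAt_exp t).sub_const 1).div_const 2).const_mul (-a)
    have h2 : HasDerivAt (fun t : ℝ => Real.exp t + 2/a) (Real.exp t) t :=
      (Real.hasDerivAt_exp t).add_const _
    have := ((hi.exp).mul h2).const_mul (-(2/a))
    refine this.congr_deriv ?_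
    field_simp
    ring
  have hpos : ∀ t ∈ Set.Ioi (0:ℝ),
      0 ≤ Real.exp (-a * ((Real.exp t - 1) / 2)) * Real.exp t ^ 2 := by
    intro t _; positivity
  have htend : Tendsto g atTop (nhds 0) := by
    have hb : 0 < a / 2 := by linarith
    have h1 : Tendsto (fun u : ℝ => (u + 2/a) * Real.exp (-(a/2) * u)) atTop (nhds 0) :=
      tendsto_aux (a/2) (2/a) hb
    have h2 := (h1.comp Real.tendsto_exp_atTop).const_mul (-(2/a) * Real.exp (a/2))
    rw [mul_zero] at h2
    apply h2.congr
    intro t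
    simp only [Function.comp, hg]
    rw [show -a * ((Real.exp t - 1) / 2) = a/2 + (-(a/2) * Real.exp t) by ring, Real.exp_add]
    ring
  have hint := integrableOn_Ioi_deriv_of_nonneg' hderiv hpos htend
  refine ⟨hint, ?_⟩
  rw [integral_Ioi_of_hasDerivAt_of_nonneg' hderiv hpos htend]
  simp only [hg]
  norm_num
  field_simp
  ring

noncomputable def J2 (r : ℝ) : ℝ :=
  ∫ t in Set.Ioi (0 : ℝ), Real.exp (-r * Real.cosh t) * Real.cosh t ^ 2

lemma cosh_le_exp (t : ℝ) (ht : 0 ≤ t) : Real.cosh t ≤ Real.exp t := by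
  rw [Real.cosh_eq]
  have h1 : Real.exp (-t) ≤ Real.exp t := Real.exp_le_exp.2 (by linarith)
  linarith

lemma half_le_cosh (t : ℝ) : (Real.exp t - 1) / 2 ≤ Real.cosh t := by
  rw [Real.cosh_eq]
  have h1 : 0 < Real.exp (-t) := Real.exp_pos _
  linarith

lemma exp_le_exp_half (a t : ℝ) (ha : 0 ≤ a) :
    Real.exp (-a * Real.cosh t) ≤ Real.exp (-a * ((Real.exp t - 1) / 2)) := by
  apply Real.exp_le_exp.2
  have := half_le_cosh t
  nlinarith

lemma P1 (a t : ℝ) (ha : 0 ≤ a) (ht : 0 ≤ t) :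
    Real.exp (-a * Real.cosh t) * Real.cosh t
      ≤ Real.exp (-a * ((Real.exp t - 1) / 2)) * Real.exp t :=
  mul_le_mul (exp_le_exp_half a t ha) (cosh_le_exp t ht) (Real.cosh_pos t).le
    (Real.exp_pos _).le

lemma P2 (a t : ℝ) (ha : 0 ≤ a) (ht : 0 ≤ t) :
    Real.exp (-a * Real.cosh t) * Real.cosh t ^ 2
      ≤ Real.exp (-a * ((Real.exp t - 1) / 2)) * Real.exp t ^ 2 := by
  apply mul_le_mul (exp_le_exp_half a t ha) ?_ (by positivity) (Real.exp_pos _).le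
  have h := cosh_le_exp t ht
  have h2 := (Real.cosh_pos t).le
  nlinarith

lemma P3 (r t : ℝ) (hr : 0 ≤ r) (ht : 0 ≤ t) :
    Real.exp (-r * Real.cosh t) * Real.cosh t ^ 2
      ≤ Real.exp (-(r/2)) * (Real.exp (-(r/2) * ((Real.exp t - 1) / 2)) * Real.exp t ^ 2) := by
  have hexp : Real.exp (-r * Real.cosh t)
      ≤ Real.exp (-(r/2)) * Real.exp (-(r/2) * ((Real.exp t - 1) / 2)) := by
    rw [← Real.exp_add]
    apply Real.exp_le_exp.2
    have h1 := half_le_cosh t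
    have h2 := Real.one_le_cosh t
    nlinarith
  have h := cosh_le_exp t ht
  have h2 := (Real.cosh_pos t).le
  calc Real.exp (-r * Real.cosh t) * Real.cosh t ^ 2
      ≤ (Real.exp (-(r/2)) * Real.exp (-(r/2) * ((Real.exp t - 1) / 2))) * Real.exp t ^ 2 := by
        apply mul_le_mul hexp ?_ (by positivity) (by positivity)
        nlinarith
    _ = _ := by ring

lemma integrableOn_K1int {r : ℝ} (hr : 0 < r) :
    IntegrableOn (fun t => Real.exp (-r * Real.cosh t) * Real.cosh t) (Set.Ioi 0) := by
  apply Integrable.mono (intA r hr).1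
  · exact (Continuous.aestronglyMeasurable (by fun_prop))
  · filter_upwards [ae_restrict_mem measurableSet_Ioi] with t ht
    rw [Real.norm_eq_abs, Real.norm_eq_abs, abs_of_nonneg (by positivity),
      abs_of_nonneg (by positivity)]
    exact P1 r t hr.le (le_of_lt ht)

lemma integrableOn_J2int {r : ℝ} (hr : 0 < r) :
    IntegrableOn (fun t => Real.exp (-r * Real.cosh t) * Real.cosh t ^ 2) (Set.Ioi 0) := by
  apply Integrable.mono (intB r hr).1
  · exact (Continuous.aestronglyMeasurable (by fun_prop))
  · filter_upwards [ae_restrict_mem measurableSet_Ioi] with t ht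
    rw [Real.norm_eq_abs, Real.norm_eq_abs, abs_of_nonneg (by positivity),
      abs_of_nonneg (by positivity)]
    exact P2 r t hr.le (le_of_lt ht)

lemma K1_nonneg (r : ℝ) : 0 ≤ besselK1 r := by
  apply setIntegral_nonneg measurableSet_Ioi
  intro t _
  positivity

lemma K1_le {r : ℝ} (hr : 0 < r) : besselK1 r ≤ 2 / r := by
  have h := setIntegral_mono_on (integrableOn_K1int hr) (intA r hr).1 measurableSet_Ioi
    (fun t ht => P1 r t hr.le (le_of_lt ht))
  rw [(intA r hr).2] at h
  exact h

lemma J2_nonneg (r : ℝ) : 0 ≤ J2 r := by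
  apply setIntegral_nonneg measurableSet_Ioi
  intro t _
  positivity

lemma J2_le {r : ℝ} (hr : 0 < r) : J2 r ≤ 20 / r ^ 2 := by
  have hr2 : 0 < r / 2 := by linarith
  have h := setIntegral_mono_on (integrableOn_J2int hr) ((intB (r/2) hr2).1.const_mul
    (Real.exp (-(r/2)))) measurableSet_Ioi (fun t ht => P3 r t hr.le (le_of_lt ht))
  rw [MeasureTheory.integral_const_mul, (intB (r/2) hr2).2] at h
  have key : Real.exp (-(r/2)) * (2 / (r/2) + 4 / (r/2) ^ 2) ≤ 20 / r ^ 2 := by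
    have h1 : (1 : ℝ) + r/4 ≤ Real.exp (r/4) := by
      have := Real.add_one_le_exp (r/4); linarith
    have h2 : Real.exp (r/2) = Real.exp (r/4) * Real.exp (r/4) := by
      rw [← Real.exp_add]; ring_nf
    have h3 : (1 + r/4) ^ 2 ≤ Real.exp (r/2) := by
      rw [h2, sq]
      have : (0:ℝ) < 1 + r/4 := by linarith
      exact mul_le_mul h1 h1 this.le (Real.exp_pos _).le
    rw [Real.exp_neg, inv_mul_eq_div, div_le_div_iff₀ (Real.exp_pos _) (by positivity)]
    have hexp := Real.exp_pos (r/2)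
    have e1 : 2 / (r/2) = 4 / r := by field_simp; ring
    have e2 : 4 / (r/2) ^ 2 = 16 / r ^ 2 := by rw [div_pow]; field_simp; ring
    rw [e1, e2]
    have e3 : (4 / r + 16 / r ^ 2) * r ^ 2 = 4 * r + 16 := by field_simp
    rw [e3]
    nlinarith
  exact le_trans h key


lemma hasDerivAt_K1 {r : ℝ} (hr : 0 < r) : HasDerivAt besselK1 (-J2 r) r := by
  have key := hasDerivAt_integral_of_dominated_loc_of_deriv_le
    (μ := volume.restrict (Set.Ioi (0:ℝ))) (x₀ := r) (s := Metric.ball r (r/2))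
    (F := fun s t => Real.exp (-s * Real.cosh t) * Real.cosh t)
    (F' := fun s t => Real.exp (-s * Real.cosh t) * (-Real.cosh t) * Real.cosh t)
    (bound := fun t => Real.exp (-(r/2) * Real.cosh t) * Real.cosh t ^ 2)
    (Metric.ball_mem_nhds r (half_pos hr))
    (Filter.Eventually.of_forall fun s => (Continuous.aestronglyMeasurable (by fun_prop)))
    (integrableOn_K1int hr)
    (Continuous.aestronglyMeasurable (by fun_prop))
    ?_ (integrableOn_J2int (half_pos hr)) ?_
  · have heq : ∫ t in Set.Ioi (0:ℝ), Real.exp (-r * Real.cosh t) * (-Real.cosh t) * Real.cosh t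
        = -J2 r := by
      rw [J2, ← MeasureTheory.integral_neg]
      congr 1
      funext t
      ring
    rw [heq] at key
    exact key.2
  · filter_upwards [ae_restrict_mem measurableSet_Ioi] with t ht s hs
    rw [Metric.mem_ball, Real.dist_eq, abs_lt] at hs
    have hs2 : r/2 ≤ s := by linarith [hs.1]
    have hch := (Real.cosh_pos t).le
    rw [Real.norm_eq_abs]
    have : Real.exp (-s * Real.cosh t) * -Real.cosh t * Real.cosh t
        = -(Real.exp (-s * Real.cosh t) * Real.cosh t ^ 2) := by ring
    rw [this, abs_neg, abs_of_nonneg (by positivity)]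
    have hee : Real.exp (-s * Real.cosh t) ≤ Real.exp (-(r/2) * Real.cosh t) := by
      apply Real.exp_le_exp.2
      nlinarith
    nlinarith [Real.exp_pos (-s * Real.cosh t), sq_nonneg (Real.cosh t)]
  · filter_upwards [ae_restrict_mem measurableSet_Ioi] with t _ s _
    have h1 : HasDerivAt (fun s : ℝ => -s * Real.cosh t) (-Real.cosh t) s := by
      simpa [mul_comm] using ((hasDerivAt_id s).const_mul (-Real.cosh t))
    exact (h1.exp).mul_const (Real.cosh t)


noncomputable def perpL : EuclideanSpace ℝ (Fin 2) →L[ℝ] EuclideanSpace ℝ (Fin 2) :=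
  LinearMap.toContinuousLinearMap
  { toFun := perp
    map_add' := by
      intro x y
      ext j
      fin_cases j <;>
        simp [perp, EuclideanSpace.single_apply, PiLp.add_apply] <;> ring
    map_smul' := by
      intro c x
      ext j
      fin_cases j <;>
        simp [perp, EuclideanSpace.single_apply, PiLp.smul_apply, smul_eq_mul] <;> ring }

lemma perpL_apply (z : EuclideanSpace ℝ (Fin 2)) : perpL z = perp z := rfl

lemma norm_perp (z : EuclideanSpace ℝ (Fin 2)) : ‖perp z‖ = ‖z‖ := by
  have h0 : perp z 0 = -(z 1) := by
    simp [perp, EuclideanSpace.single_apply, PiLp.add_apply]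
  have h1 : perp z 1 = z 0 := by
    simp [perp, EuclideanSpace.single_apply, PiLp.add_apply]
  rw [EuclideanSpace.norm_eq, EuclideanSpace.norm_eq, Fin.sum_univ_two, Fin.sum_univ_two,
    h0, h1]
  congr 1
  simp only [Real.norm_eq_abs, abs_neg, sq_abs]
  ring

set_option maxHeartbeats 1000000 in
lemma key_one (x : EuclideanSpace ℝ (Fin 2)) (hx : x ≠ 0) :
    ∃ L : EuclideanSpace ℝ (Fin 2) →L[ℝ] EuclideanSpace ℝ (Fin 2),
      HasFDerivAt (smoothedKernel 1) L x ∧ ‖L‖ ≤ 4 / ‖x‖ ^ 2 := by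
  have hr : 0 < ‖x‖ := norm_pos_iff.mpr hx
  -- derivative of the norm function
  have hsq : HasFDerivAt (fun y : EuclideanSpace ℝ (Fin 2) => ‖y‖ ^ 2)
      (2 • innerSL ℝ x) x := (hasStrictFDerivAt_norm_sq x).hasFDerivAt
  have hsqrt : HasDerivAt Real.sqrt (1 / (2 * Real.sqrt (‖x‖ ^ 2))) (‖x‖ ^ 2) :=
    Real.hasDerivAt_sqrt (by positivity)
  have hnorm0 := hsqrt.comp_hasFDerivAt x hsq
  rw [Real.sqrt_sq (norm_nonneg x)] at hnorm0
  have hfuneq : (Real.sqrt ∘ fun y : EuclideanSpace ℝ (Fin 2) => ‖y‖ ^ 2)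
      = fun y : EuclideanSpace ℝ (Fin 2) => ‖y‖ :=
    funext fun y => Real.sqrt_sq (norm_nonneg y)
  rw [hfuneq] at hnorm0
  set N : EuclideanSpace ℝ (Fin 2) →L[ℝ] ℝ := (1 / (2 * ‖x‖)) • (2 • innerSL ℝ x) with hN
  have hNle : ∀ v, |N v| ≤ ‖v‖ := by
    intro v
    have hv : N v = (1 / (2 * ‖x‖)) * (2 * (inner ℝ x v : ℝ)) := by
      rw [hN]
      rw [ContinuousLinearMap.smul_apply, ContinuousLinearMap.smul_apply, innerSL_apply_apply,
        smul_eq_mul, nsmul_eq_mul]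
      norm_num
    have h1 : |(inner ℝ x v : ℝ)| ≤ ‖x‖ * ‖v‖ := abs_real_inner_le_norm x v
    have h2 : |(1 : ℝ) / (2 * ‖x‖)| = 1 / (2 * ‖x‖) := abs_of_pos (by positivity)
    have h3 : |(2 : ℝ)| = 2 := by norm_num
    rw [hv, abs_mul, abs_mul, h2, h3, div_mul_eq_mul_div, one_mul,
      div_le_iff₀ (by positivity : (0:ℝ) < 2 * ‖x‖)]
    nlinarith [abs_nonneg ((inner ℝ x v : ℝ))]
  -- derivative of the scalar profile
  have hDPsi_eq : ∀ s : ℝ, DPsi 1 s = (1 / (2 * Real.pi)) * (-besselK1 s + s⁻¹) := by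
    intro s; simp [DPsi]
  have hK := hasDerivAt_K1 hr
  have hD : HasDerivAt (fun s : ℝ => DPsi 1 s)
      ((1 / (2 * Real.pi)) * (J2 ‖x‖ + -(‖x‖ ^ 2)⁻¹)) ‖x‖ := by
    rw [funext hDPsi_eq]
    have h := ((hK.neg).add (hasDerivAt_inv hr.ne')).const_mul (1 / (2 * Real.pi))
    refine h.congr_deriv ?_
    ring
  have hphi : HasDerivAt (fun s : ℝ => DPsi 1 s / s)
      (((1 / (2 * Real.pi)) * (J2 ‖x‖ + -(‖x‖ ^ 2)⁻¹) * ‖x‖ - DPsi 1 ‖x‖ * 1) / ‖x‖ ^ 2)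
      ‖x‖ := hD.div (hasDerivAt_id ‖x‖) hr.ne'
  set phi' : ℝ :=
    ((1 / (2 * Real.pi)) * (J2 ‖x‖ + -(‖x‖ ^ 2)⁻¹) * ‖x‖ - DPsi 1 ‖x‖ * 1) / ‖x‖ ^ 2
    with hphi'
  have hc : HasFDerivAt (fun y : EuclideanSpace ℝ (Fin 2) => DPsi 1 ‖y‖ / ‖y‖)
      (phi' • N) x := hphi.comp_hasFDerivAt x hnorm0
  have hperp : HasFDerivAt (fun y : EuclideanSpace ℝ (Fin 2) => perpL y) perpL x :=
    perpL.hasFDerivAt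
  have hL0 := hc.smul hperp
  refine ⟨(DPsi 1 ‖x‖ / ‖x‖) • perpL + (phi' • N).smulRight (perpL x), ?_, ?_⟩
  · have heq : smoothedKernel 1
        = fun y : EuclideanSpace ℝ (Fin 2) => (DPsi 1 ‖y‖ / ‖y‖) • perpL y := by
      funext y
      simp only [smoothedKernel, perpL_apply]
    rw [heq]
    exact hL0
  · -- norm bound
    have hK1b := K1_le hr
    have hK1n := K1_nonneg ‖x‖
    have hJ2b := J2_le hr
    have hJ2n := J2_nonneg ‖x‖
    have hpi : (3 : ℝ) < Real.pi := Real.pi_gt_three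
    have hpi0 : (0 : ℝ) < Real.pi := by linarith
    have hr2 : (0:ℝ) < ‖x‖ ^ 2 := by positivity
    have hPabs : |DPsi 1 ‖x‖| ≤ 1 / (2 * Real.pi) * (1 / ‖x‖) := by
      rw [hDPsi_eq]
      rw [abs_mul, abs_of_pos (by positivity : (0:ℝ) < 1 / (2 * Real.pi))]
      apply mul_le_mul_of_nonneg_left _ (by positivity)
      have hxi : ‖x‖⁻¹ = 1 / ‖x‖ := by rw [inv_eq_one_div]
      have e2 : (2:ℝ) / ‖x‖ = 2 * (1 / ‖x‖) := by ring
      apply abs_le.mpr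
      rw [hxi]
      constructor <;> linarith [hK1b, hK1n, e2]
    have hDabs : |(1 / (2 * Real.pi)) * (J2 ‖x‖ + -(‖x‖ ^ 2)⁻¹)|
        ≤ 1 / (2 * Real.pi) * (21 / ‖x‖ ^ 2) := by
      rw [abs_mul, abs_of_pos (by positivity : (0:ℝ) < 1 / (2 * Real.pi))]
      apply mul_le_mul_of_nonneg_left _ (by positivity)
      have hinv : (‖x‖ ^ 2)⁻¹ = 1 / ‖x‖ ^ 2 := by rw [inv_eq_one_div]
      have hq : (0:ℝ) < 1 / ‖x‖ ^ 2 := by positivity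
      have e20 : (20:ℝ) / ‖x‖ ^ 2 = 20 * (1 / ‖x‖ ^ 2) := by ring
      have e21 : (21:ℝ) / ‖x‖ ^ 2 = 21 * (1 / ‖x‖ ^ 2) := by ring
      rw [hinv]
      apply abs_le.mpr
      constructor <;> linarith [hJ2n, hJ2b, hq, e20, e21]
    have hphi'abs : |phi'| ≤ 1 / (2 * Real.pi) * (22 / ‖x‖ ^ 3) := by
      rw [hphi', abs_div, abs_of_pos hr2, div_le_iff₀ hr2]
      have habs : |(1 / (2 * Real.pi)) * (J2 ‖x‖ + -(‖x‖ ^ 2)⁻¹) * ‖x‖ - DPsi 1 ‖x‖ * 1|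
          ≤ |(1 / (2 * Real.pi)) * (J2 ‖x‖ + -(‖x‖ ^ 2)⁻¹)| * ‖x‖ + |DPsi 1 ‖x‖| := by
        calc |(1 / (2 * Real.pi)) * (J2 ‖x‖ + -(‖x‖ ^ 2)⁻¹) * ‖x‖ - DPsi 1 ‖x‖ * 1|
            ≤ |(1 / (2 * Real.pi)) * (J2 ‖x‖ + -(‖x‖ ^ 2)⁻¹) * ‖x‖| + |DPsi 1 ‖x‖ * 1| :=
              abs_sub _ _
          _ = |(1 / (2 * Real.pi)) * (J2 ‖x‖ + -(‖x‖ ^ 2)⁻¹)| * ‖x‖ + |DPsi 1 ‖x‖| := by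
              rw [mul_one, abs_mul, abs_of_pos hr]
      have hsum : |(1 / (2 * Real.pi)) * (J2 ‖x‖ + -(‖x‖ ^ 2)⁻¹)| * ‖x‖ + |DPsi 1 ‖x‖|
          ≤ 1 / (2 * Real.pi) * (21 / ‖x‖ ^ 2) * ‖x‖ + 1 / (2 * Real.pi) * (1 / ‖x‖) :=
        add_le_add (mul_le_mul_of_nonneg_right hDabs hr.le) hPabs
      have heq2 : 1 / (2 * Real.pi) * (21 / ‖x‖ ^ 2) * ‖x‖ + 1 / (2 * Real.pi) * (1 / ‖x‖)
          = 1 / (2 * Real.pi) * (22 / ‖x‖ ^ 3) * ‖x‖ ^ 2 := by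
        field_simp
        ring
      linarith [habs, hsum]
    apply ContinuousLinearMap.opNorm_le_bound _ (by positivity)
    intro v
    have happ : ((DPsi 1 ‖x‖ / ‖x‖) • perpL + (phi' • N).smulRight (perpL x)) v
        = (DPsi 1 ‖x‖ / ‖x‖) • perpL v + (phi' * N v) • perpL x := by
      simp only [ContinuousLinearMap.add_apply, ContinuousLinearMap.coe_smul',
        Pi.smul_apply, ContinuousLinearMap.smulRight_apply, ContinuousLinearMap.smul_apply,
        smul_eq_mul]
    rw [happ]
    have hb1 : |DPsi 1 ‖x‖ / ‖x‖| ≤ 1 / (2 * Real.pi) * (1 / ‖x‖) / ‖x‖ := by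
      rw [abs_div, abs_of_pos hr]
      gcongr
    have hb2 : |phi' * N v| ≤ 1 / (2 * Real.pi) * (22 / ‖x‖ ^ 3) * ‖v‖ := by
      rw [abs_mul]
      exact mul_le_mul hphi'abs (hNle v) (abs_nonneg _) (by positivity)
    have hnum : 1 / (2 * Real.pi) * (1 / ‖x‖) / ‖x‖
        + 1 / (2 * Real.pi) * (22 / ‖x‖ ^ 3) * ‖x‖ ≤ 4 / ‖x‖ ^ 2 := by
      have e : 1 / (2 * Real.pi) * (1 / ‖x‖) / ‖x‖
          + 1 / (2 * Real.pi) * (22 / ‖x‖ ^ 3) * ‖x‖ = 23 / (2 * Real.pi * ‖x‖ ^ 2) := by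
        field_simp
        ring
      rw [e, div_le_div_iff₀ (by positivity) hr2]
      nlinarith [hr2]
    calc ‖(DPsi 1 ‖x‖ / ‖x‖) • perpL v + (phi' * N v) • perpL x‖
        ≤ ‖(DPsi 1 ‖x‖ / ‖x‖) • perpL v‖ + ‖(phi' * N v) • perpL x‖ := norm_add_le _ _
      _ = |DPsi 1 ‖x‖ / ‖x‖| * ‖v‖ + |phi' * N v| * ‖x‖ := by
          rw [norm_smul, norm_smul, Real.norm_eq_abs, Real.norm_eq_abs, perpL_apply,
            perpL_apply, norm_perp, norm_perp]
      _ ≤ (1 / (2 * Real.pi) * (1 / ‖x‖) / ‖x‖) * ‖v‖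
          + (1 / (2 * Real.pi) * (22 / ‖x‖ ^ 3) * ‖v‖) * ‖x‖ :=
          add_le_add (mul_le_mul_of_nonneg_right hb1 (norm_nonneg v))
            (mul_le_mul_of_nonneg_right hb2 hr.le)
      _ = (1 / (2 * Real.pi) * (1 / ‖x‖) / ‖x‖
          + 1 / (2 * Real.pi) * (22 / ‖x‖ ^ 3) * ‖x‖) * ‖v‖ := by ring
      _ ≤ 4 / ‖x‖ ^ 2 * ‖v‖ := mul_le_mul_of_nonneg_right hnum (norm_nonneg v)

lemma perp_zero : perp (0 : EuclideanSpace ℝ (Fin 2)) = 0 := by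
  have := perpL.map_zero
  rwa [perpL_apply] at this

lemma perp_smul (c : ℝ) (x : EuclideanSpace ℝ (Fin 2)) : perp (c • x) = c • perp x := by
  have := perpL.map_smul c x
  rwa [perpL_apply, perpL_apply] at this

lemma smoothedKernel_scaling {α : ℝ} (hα : 0 < α) :
    smoothedKernel α = fun x => α⁻¹ • smoothedKernel 1 (α⁻¹ • x) := by
  funext x
  rcases eq_or_ne x 0 with rfl | hx
  · rw [smul_zero]
    simp [smoothedKernel, perp_zero]
  · have hr : 0 < ‖x‖ := norm_pos_iff.mpr hx
    have hn : ‖(α⁻¹ • x : EuclideanSpace ℝ (Fin 2))‖ = α⁻¹ * ‖x‖ := by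
      rw [norm_smul, Real.norm_eq_abs, abs_of_pos (inv_pos.mpr hα)]
    rw [smoothedKernel, smoothedKernel, hn, perp_smul, smul_smul, smul_smul]
    congr 1
    have hK : (α⁻¹ * ‖x‖) / 1 = ‖x‖ / α := by field_simp
    rw [DPsi, DPsi, hK]
    have hα' : α ≠ 0 := hα.ne'
    have hx' : ‖x‖ ≠ 0 := hr.ne'
    generalize besselK1 (‖x‖ / α) = K
    have hπ : Real.pi ≠ 0 := Real.pi_ne_zero
    field_simp


end aux

/-- `|∇K^α(x)| ≤ C/|x|²` for all `x ≠ 0`, with `C` an absolute constant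
independent of `α`. -/
theorem smoothed_kernel_gradient_bound :
    ∃ C > 0, ∀ α : ℝ, 0 < α → ∀ x : EuclideanSpace ℝ (Fin 2), x ≠ 0 →
      ‖fderiv ℝ (smoothedKernel α) x‖ ≤ C / ‖x‖ ^ 2 := by
  refine ⟨4, by norm_num, ?_⟩
  intro α hα x hx
  have hα' : α⁻¹ ≠ 0 := inv_ne_zero hα.ne'
  have hy : (α⁻¹ • x : EuclideanSpace ℝ (Fin 2)) ≠ 0 := smul_ne_zero hα' hx
  obtain ⟨L, hL, hLb⟩ := key_one _ hy
  have hin : HasFDerivAt (fun y : EuclideanSpace ℝ (Fin 2) => α⁻¹ • y)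
      (α⁻¹ • ContinuousLinearMap.id ℝ (EuclideanSpace ℝ (Fin 2))) x :=
    (hasFDerivAt_id x).const_smul α⁻¹
  have hcomp :
      HasFDerivAt (fun y : EuclideanSpace ℝ (Fin 2) => α⁻¹ • smoothedKernel 1 (α⁻¹ • y))
        (α⁻¹ • (L.comp (α⁻¹ • ContinuousLinearMap.id ℝ (EuclideanSpace ℝ (Fin 2))))) x :=
    (hL.comp x hin).const_smul α⁻¹
  rw [smoothedKernel_scaling hα, hcomp.fderiv]
  have hiα : 0 < α⁻¹ := inv_pos.mpr hα
  have hM : ‖(α⁻¹ • ContinuousLinearMap.id ℝ (EuclideanSpace ℝ (Fin 2)))‖ ≤ α⁻¹ := by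
    calc ‖(α⁻¹ • ContinuousLinearMap.id ℝ (EuclideanSpace ℝ (Fin 2)))‖
        ≤ ‖(α⁻¹ : ℝ)‖ * ‖ContinuousLinearMap.id ℝ (EuclideanSpace ℝ (Fin 2))‖ :=
          ContinuousLinearMap.opNorm_smul_le _ _
      _ ≤ α⁻¹ * 1 := by
          rw [Real.norm_eq_abs, abs_of_pos hiα]
          exact mul_le_mul_of_nonneg_left ContinuousLinearMap.norm_id_le hiα.le
      _ = α⁻¹ := mul_one _
  have hr : 0 < ‖x‖ := norm_pos_iff.mpr hx
  have hny : ‖(α⁻¹ • x : EuclideanSpace ℝ (Fin 2))‖ = α⁻¹ * ‖x‖ := by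
    rw [norm_smul, Real.norm_eq_abs, abs_of_pos hiα]
  calc ‖α⁻¹ • (L.comp (α⁻¹ • ContinuousLinearMap.id ℝ (EuclideanSpace ℝ (Fin 2))))‖
      ≤ α⁻¹ * ‖L.comp (α⁻¹ • ContinuousLinearMap.id ℝ (EuclideanSpace ℝ (Fin 2)))‖ := by
        have := ContinuousLinearMap.opNorm_smul_le α⁻¹
          (L.comp (α⁻¹ • ContinuousLinearMap.id ℝ (EuclideanSpace ℝ (Fin 2))))
        rwa [Real.norm_eq_abs, abs_of_pos hiα] at this
    _ ≤ α⁻¹ * (‖L‖ * α⁻¹) := by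
        apply mul_le_mul_of_nonneg_left _ hiα.le
        calc ‖L.comp (α⁻¹ • ContinuousLinearMap.id ℝ (EuclideanSpace ℝ (Fin 2)))‖
            ≤ ‖L‖ * ‖(α⁻¹ • ContinuousLinearMap.id ℝ (EuclideanSpace ℝ (Fin 2)))‖ :=
              ContinuousLinearMap.opNorm_comp_le _ _
          _ ≤ ‖L‖ * α⁻¹ := mul_le_mul_of_nonneg_left hM (norm_nonneg _)
    _ ≤ α⁻¹ * ((4 / ‖(α⁻¹ • x : EuclideanSpace ℝ (Fin 2))‖ ^ 2) * α⁻¹) := by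
        apply mul_le_mul_of_nonneg_left _ hiα.le
        exact mul_le_mul_of_nonneg_right hLb hiα.le
    _ = 4 / ‖x‖ ^ 2 := by
        rw [hny]
        field_simp
end
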